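/- Let V : L^1([0,1]) → C([0,1]) be the Volterra operator. Then the distance from V to the set of weakly compact operators equals 1/2, i.e. inf{‖V − S‖ : S : L^1([0,1]) → C([0,1]) bounded linear and weakly compact} = 1/2. -/

import Mathlib

open MeasureTheory Set Filter

set_option linter.unusedVariables false

/-- Lebesgue measure restricted to `[0,1]`. -/
noncomputable def mu01 : Measure ℝ := volume.restrict (Icc (0:ℝ) 1)

/-- A bounded linear operator between normed spaces is weakly compact if the closure,
in the weak topology of the codomain, of the image of the closed unit ball is compact. -/
def IsWeaklyCompactOperator {X Y : Type*} [NormedAddCommGroup X] [NormedSpace ℝ X]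
    [NormedAddCommGroup Y] [NormedSpace ℝ Y] (S : X →L[ℝ] Y) : Prop :=
  IsCompact (closure ((toWeakSpace ℝ Y) '' (⇑S '' Metric.closedBall 0 1)))

lemma mu01_Ioc {a : ℝ} (ha : 0 ≤ a) (ha1 : a ≤ 1) : mu01 (Ioc 0 a) = ENNReal.ofReal a := by
  have hsub : Ioc (0:ℝ) a ⊆ Icc (0:ℝ) 1 := fun x hx => ⟨le_of_lt hx.1, hx.2.trans ha1⟩
  rw [mu01, Measure.restrict_apply measurableSet_Ioc,
    inter_eq_left.mpr hsub, Real.volume_Ioc, sub_zero]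

instance : IsFiniteMeasure mu01 := by
  refine ⟨?_⟩
  rw [mu01, Measure.restrict_apply_univ]
  simp [Real.volume_Icc]

noncomputable def constCLM : ℝ →L[ℝ] C(Icc (0:ℝ) 1, ℝ) :=
  (ContinuousLinearMap.id ℝ ℝ).smulRight (1 : C(Icc (0:ℝ) 1, ℝ))

lemma constCLM_apply (r : ℝ) (x : Icc (0:ℝ) 1) : constCLM r x = r := by
  simp [constCLM]

noncomputable def S0 : Lp ℝ 1 mu01 →L[ℝ] C(Icc (0:ℝ) 1, ℝ) :=
  constCLM.comp ((1/2 : ℝ) • (L1.integralCLM : Lp ℝ 1 mu01 →L[ℝ] ℝ))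

lemma S0_apply (f : Lp ℝ 1 mu01) (x : Icc (0:ℝ) 1) :
    S0 f x = (1/2) * ∫ t, (f : ℝ → ℝ) t ∂mu01 := by
  show constCLM ((1/2 : ℝ) * L1.integralCLM f) x = _
  rw [constCLM_apply]
  congr 1
  rw [← L1.integral_eq_integral, L1.integral_eq]

instance : T2Space (WeakSpace ℝ C(Icc (0:ℝ) 1, ℝ)) := by
  apply (WeakBilin.isEmbedding (B := (topDualPairing ℝ C(Icc (0:ℝ) 1, ℝ)).flip) ?_).t2Space
  exact separatingDual_iff_injective.mp inferInstance

lemma S0_weaklyCompact :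
    IsCompact (closure ((toWeakSpace ℝ C(Icc (0:ℝ) 1, ℝ)) '' (⇑S0 '' Metric.closedBall 0 1))) := by
  set Y := C(Icc (0:ℝ) 1, ℝ)
  set J : ℝ →L[ℝ] WeakSpace ℝ Y := (toWeakSpaceCLM ℝ Y).comp constCLM with hJ
  have hKcomp : IsCompact (J '' Icc (-1 : ℝ) 1) := isCompact_Icc.image J.continuous
  have hsub : (toWeakSpace ℝ Y) '' (⇑S0 '' Metric.closedBall 0 1) ⊆ J '' Icc (-1:ℝ) 1 := by
    rintro _ ⟨_, ⟨f, hf, rfl⟩, rfl⟩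
    refine ⟨(1/2) * ∫ t, (f : ℝ → ℝ) t ∂mu01, ?_, ?_⟩
    · have h1 : |∫ t, (f : ℝ → ℝ) t ∂mu01| ≤ ‖f‖ := by
        rw [L1.norm_eq_integral_norm]
        simpa using norm_integral_le_integral_norm (μ := mu01) (f := fun t => (f : ℝ → ℝ) t)
      have h2 : ‖f‖ ≤ 1 := by
        simpa [Metric.mem_closedBall, dist_zero_right] using hf
      constructor <;> nlinarith [abs_nonneg (∫ t, (f : ℝ → ℝ) t ∂mu01),
        neg_abs_le (∫ t, (f : ℝ → ℝ) t ∂mu01), le_abs_self (∫ t, (f : ℝ → ℝ) t ∂mu01)]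
    · show toWeakSpace ℝ Y (constCLM _) = toWeakSpace ℝ Y (S0 f)
      congr 1
      ext x
      rw [constCLM_apply, S0_apply]
  exact hKcomp.of_isClosed_subset isClosed_closure
    (closure_minimal hsub hKcomp.isClosed)

lemma norm_V_sub_S0_le (V : Lp ℝ 1 mu01 →L[ℝ] C(Icc (0:ℝ) 1, ℝ))
    (hV : ∀ (f : Lp ℝ 1 mu01) (x : Icc (0:ℝ) 1),
      V f x = ∫ t in Ioc (0:ℝ) (x:ℝ), (f : ℝ → ℝ) t ∂mu01) :
    ‖V - S0‖ ≤ 1/2 := by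
  apply ContinuousLinearMap.opNorm_le_bound _ (by norm_num)
  intro f
  rw [show (1:ℝ)/2 * ‖f‖ = (1/2) * ‖f‖ by ring]
  apply (ContinuousMap.norm_le _ (by positivity)).mpr
  intro x
  have hfi : Integrable (fun t => (f : ℝ → ℝ) t) mu01 := L1.integrable_coeFn f
  set s : Set ℝ := Ioc (0:ℝ) (x:ℝ) with hs
  have hms : MeasurableSet s := measurableSet_Ioc
  have hAB : (∫ t in s, (f : ℝ → ℝ) t ∂mu01) + (∫ t in sᶜ, (f : ℝ → ℝ) t ∂mu01)
      = ∫ t, (f : ℝ → ℝ) t ∂mu01 := integral_add_compl hms hfi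
  have hnAB : (∫ t in s, ‖(f : ℝ → ℝ) t‖ ∂mu01) + (∫ t in sᶜ, ‖(f : ℝ → ℝ) t‖ ∂mu01)
      = ∫ t, ‖(f : ℝ → ℝ) t‖ ∂mu01 := integral_add_compl hms hfi.norm
  have hA : |∫ t in s, (f : ℝ → ℝ) t ∂mu01| ≤ ∫ t in s, ‖(f : ℝ → ℝ) t‖ ∂mu01 := by
    simpa using norm_integral_le_integral_norm (μ := mu01.restrict s) (f := fun t => (f : ℝ → ℝ) t)
  have hB : |∫ t in sᶜ, (f : ℝ → ℝ) t ∂mu01| ≤ ∫ t in sᶜ, ‖(f : ℝ → ℝ) t‖ ∂mu01 := by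
    simpa using norm_integral_le_integral_norm (μ := mu01.restrict sᶜ) (f := fun t => (f : ℝ → ℝ) t)
  have hnorm : ‖f‖ = ∫ t, ‖(f : ℝ → ℝ) t‖ ∂mu01 := L1.norm_eq_integral_norm f
  have hVx : (V - S0) f x = V f x - S0 f x := rfl
  rw [hVx, hV, S0_apply]
  rw [Real.norm_eq_abs]
  have key : (∫ t in s, (f : ℝ → ℝ) t ∂mu01) - 1/2 * ∫ t, (f : ℝ → ℝ) t ∂mu01
      = 1/2 * ((∫ t in s, (f : ℝ → ℝ) t ∂mu01) - (∫ t in sᶜ, (f : ℝ → ℝ) t ∂mu01)) := by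
    rw [← hAB]; ring
  rw [key, abs_mul, abs_of_pos (by norm_num : (0:ℝ) < 1/2)]
  have : |(∫ t in s, (f : ℝ → ℝ) t ∂mu01) - (∫ t in sᶜ, (f : ℝ → ℝ) t ∂mu01)| ≤ ‖f‖ := by
    rw [hnorm, ← hnAB]
    calc _ ≤ |∫ t in s, (f : ℝ → ℝ) t ∂mu01| + |∫ t in sᶜ, (f : ℝ → ℝ) t ∂mu01| := abs_sub _ _
    _ ≤ _ := add_le_add hA hB
  linarith

noncomputable def gseq (m : ℕ) : Lp ℝ 1 mu01 :=
  indicatorConstLp 1 (measurableSet_Ioc (a := (0:ℝ)) (b := 1/((m:ℝ)+1)))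
    (measure_ne_top _ _) ((m:ℝ)+1)

lemma one_div_mem (m : ℕ) : (0:ℝ) < 1/((m:ℝ)+1) ∧ 1/((m:ℝ)+1) ≤ 1 := by
  constructor
  · positivity
  · rw [div_le_one (by positivity)]
    have : (0:ℝ) ≤ (m:ℝ) := Nat.cast_nonneg m
    linarith

lemma gseq_norm (m : ℕ) : ‖gseq m‖ = 1 := by
  rw [gseq, norm_indicatorConstLp one_ne_zero ENNReal.one_ne_top]
  rw [measureReal_def, mu01_Ioc (le_of_lt (one_div_mem m).1) (one_div_mem m).2]
  rw [ENNReal.toReal_ofReal (le_of_lt (one_div_mem m).1)]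
  simp only [ENNReal.toReal_one, div_one, Real.rpow_one, Real.norm_eq_abs]
  rw [abs_of_pos (by positivity)]
  field_simp

lemma gseq_integral (V : Lp ℝ 1 mu01 →L[ℝ] C(Icc (0:ℝ) 1, ℝ))
    (hV : ∀ (f : Lp ℝ 1 mu01) (x : Icc (0:ℝ) 1),
      V f x = ∫ t in Ioc (0:ℝ) (x:ℝ), (f : ℝ → ℝ) t ∂mu01)
    (m : ℕ) (x : Icc (0:ℝ) 1) :
    V (gseq m) x
      = (mu01 (Ioc (0:ℝ) (1/((m:ℝ)+1)) ∩ Ioc (0:ℝ) (x:ℝ))).toReal * ((m:ℝ)+1) := by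
  rw [hV]
  have hae : (fun t => (gseq m : ℝ → ℝ) t)
      =ᵐ[mu01] (Ioc (0:ℝ) (1/((m:ℝ)+1))).indicator (fun _ => (m:ℝ)+1) :=
    indicatorConstLp_coeFn
  rw [integral_congr_ae (ae_restrict_of_ae hae)]
  rw [integral_indicator_const ((m:ℝ)+1) measurableSet_Ioc]
  rw [measureReal_def, Measure.restrict_apply measurableSet_Ioc]
  simp [smul_eq_mul]

lemma gseq_V_zero (V : Lp ℝ 1 mu01 →L[ℝ] C(Icc (0:ℝ) 1, ℝ))
    (hV : ∀ (f : Lp ℝ 1 mu01) (x : Icc (0:ℝ) 1),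
      V f x = ∫ t in Ioc (0:ℝ) (x:ℝ), (f : ℝ → ℝ) t ∂mu01)
    (m : ℕ) : V (gseq m) ⟨0, by norm_num⟩ = 0 := by
  rw [gseq_integral V hV]
  simp

lemma gseq_V_one (V : Lp ℝ 1 mu01 →L[ℝ] C(Icc (0:ℝ) 1, ℝ))
    (hV : ∀ (f : Lp ℝ 1 mu01) (x : Icc (0:ℝ) 1),
      V f x = ∫ t in Ioc (0:ℝ) (x:ℝ), (f : ℝ → ℝ) t ∂mu01)
    {m N : ℕ} (hNm : N ≤ m) :
    V (gseq m) ⟨1/((N:ℝ)+1), ⟨le_of_lt (one_div_mem N).1, (one_div_mem N).2⟩⟩ = 1 := by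
  rw [gseq_integral V hV]
  have hle : (1:ℝ)/((m:ℝ)+1) ≤ 1/((N:ℝ)+1) := by
    apply one_div_le_one_div_of_le (by positivity)
    have := (Nat.cast_le (α := ℝ)).mpr hNm
    linarith
  rw [inter_eq_left.mpr (Ioc_subset_Ioc_right hle)]
  rw [mu01_Ioc (le_of_lt (one_div_mem m).1) (one_div_mem m).2,
    ENNReal.toReal_ofReal (le_of_lt (one_div_mem m).1)]
  field_simp

lemma lower_bound (V : Lp ℝ 1 mu01 →L[ℝ] C(Icc (0:ℝ) 1, ℝ))
    (hV : ∀ (f : Lp ℝ 1 mu01) (x : Icc (0:ℝ) 1),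
      V f x = ∫ t in Ioc (0:ℝ) (x:ℝ), (f : ℝ → ℝ) t ∂mu01)
    (S : Lp ℝ 1 mu01 →L[ℝ] C(Icc (0:ℝ) 1, ℝ))
    (hS : IsCompact (closure ((toWeakSpace ℝ C(Icc (0:ℝ) 1, ℝ)) '' (⇑S '' Metric.closedBall 0 1)))) :
    1/2 ≤ ‖V - S‖ := by
  set Y := C(Icc (0:ℝ) 1, ℝ)
  apply le_of_forall_pos_le_add
  intro ε hε
  set ε' : ℝ := 2*ε/3 with hε'def
  have hε' : 0 < ε' := by positivity
  -- the sequence in the weak space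
  set u : ℕ → WeakSpace ℝ Y := fun m => toWeakSpace ℝ Y (S (gseq m)) with hu_def
  have hball : ∀ m, gseq m ∈ Metric.closedBall (0 : Lp ℝ 1 mu01) 1 := by
    intro m
    rw [Metric.mem_closedBall, dist_zero_right, gseq_norm]
  have hmem : ∀ m, u m ∈ closure ((toWeakSpace ℝ Y) '' (⇑S '' Metric.closedBall 0 1)) :=
    fun m => subset_closure (mem_image_of_mem _ (mem_image_of_mem _ (hball m)))
  have hle : Filter.map u Filter.atTop ≤ Filter.principal
      (closure ((toWeakSpace ℝ Y) '' (⇑S '' Metric.closedBall 0 1))) := by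
    rw [Filter.le_principal_iff, Filter.mem_map]
    exact Filter.Eventually.of_forall hmem
  obtain ⟨w, -, hw⟩ := hS.exists_mapClusterPt (f := atTop) (u := u) hle
  set gc : Y := (toWeakSpace ℝ Y).symm w with hgc_def
  -- continuity of gc at 0
  set x0 : Icc (0:ℝ) 1 := ⟨0, by norm_num⟩ with hx0
  obtain ⟨δ, hδ, hcont⟩ := Metric.continuousAt_iff.mp (gc.continuous.continuousAt (x := x0)) ε' hε'
  obtain ⟨N, hN⟩ := exists_nat_one_div_lt hδ
  set y0 : Icc (0:ℝ) 1 := ⟨1/((N:ℝ)+1), ⟨le_of_lt (one_div_mem N).1, (one_div_mem N).2⟩⟩ with hy0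
  have hdist : dist y0 x0 < δ := by
    rw [Subtype.dist_eq, Real.dist_eq]
    simp only [hx0, hy0]
    rw [sub_zero, abs_of_pos (one_div_mem N).1]
    exact_mod_cast hN
  have hgy : dist (gc y0) (gc x0) < ε' := hcont hdist
  -- neighborhood in the weak topology
  have hc0 : Continuous fun v : WeakSpace ℝ Y => ((toWeakSpace ℝ Y).symm v) x0 :=
    WeakBilin.eval_continuous ((topDualPairing ℝ Y).flip) (ContinuousMap.evalCLM ℝ x0)
  have hc1 : Continuous fun v : WeakSpace ℝ Y => ((toWeakSpace ℝ Y).symm v) y0 :=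
    WeakBilin.eval_continuous ((topDualPairing ℝ Y).flip) (ContinuousMap.evalCLM ℝ y0)
  set U : Set (WeakSpace ℝ Y) :=
    ((fun v : WeakSpace ℝ Y => ((toWeakSpace ℝ Y).symm v) x0) ⁻¹' Metric.ball (gc x0) ε') ∩
    ((fun v : WeakSpace ℝ Y => ((toWeakSpace ℝ Y).symm v) y0) ⁻¹' Metric.ball (gc y0) ε')
    with hU_def
  have hUopen : IsOpen U :=
    (Metric.isOpen_ball.preimage hc0).inter (Metric.isOpen_ball.preimage hc1)
  have hwU : w ∈ U := by
    constructor <;> simp [Metric.mem_ball, hgc_def, hε']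
  have hfreq := mapClusterPt_iff_frequently.mp hw U (hUopen.mem_nhds hwU)
  obtain ⟨m, hmN, hmU⟩ := Filter.frequently_atTop.mp hfreq N
  -- unpack
  have hsymm : ((toWeakSpace ℝ Y).symm (u m)) = S (gseq m) := by
    rw [hu_def]; exact (toWeakSpace ℝ Y).symm_apply_apply _
  obtain ⟨hmU0, hmU1⟩ := hmU
  rw [mem_preimage, Metric.mem_ball, hsymm] at hmU0 hmU1
  -- values of V
  have hV0 : V (gseq m) x0 = 0 := gseq_V_zero V hV m
  have hV1 : V (gseq m) y0 = 1 := gseq_V_one V hV hmN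
  -- final arithmetic
  set a : ℝ := S (gseq m) x0
  set b : ℝ := S (gseq m) y0
  have h1 : |a - gc x0| < ε' := by rw [← Real.dist_eq]; exact hmU0
  have h2 : |b - gc y0| < ε' := by rw [← Real.dist_eq]; exact hmU1
  have h3 : |gc y0 - gc x0| < ε' := by rw [← Real.dist_eq]; exact hgy
  have hbnd0 : |(V - S) (gseq m) x0| ≤ ‖(V - S) (gseq m)‖ :=
    ((V - S) (gseq m)).norm_coe_le_norm x0
  have hbnd1 : |(V - S) (gseq m) y0| ≤ ‖(V - S) (gseq m)‖ :=
    ((V - S) (gseq m)).norm_coe_le_norm y0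
  have happ0 : (V - S) (gseq m) x0 = -a := by
    show V (gseq m) x0 - S (gseq m) x0 = -a
    rw [hV0]; ring
  have happ1 : (V - S) (gseq m) y0 = 1 - b := by
    show V (gseq m) y0 - S (gseq m) y0 = 1 - b
    rw [hV1]
  rw [happ0] at hbnd0
  rw [happ1] at hbnd1
  have hopn : ‖(V - S) (gseq m)‖ ≤ ‖V - S‖ := by
    have := (V - S).le_opNorm (gseq m)
    rwa [gseq_norm, mul_one] at this
  have habs0 := abs_le.mp (le_trans (le_refl _) hbnd0)
  have habs1 := abs_le.mp hbnd1
  have hA := abs_le.mp (le_of_lt h1)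
  have hB := abs_le.mp (le_of_lt h2)
  have hC := abs_le.mp (le_of_lt h3)
  rw [abs_neg] at hbnd0
  have ha' := abs_le.mp hbnd0
  have hb' := abs_le.mp hbnd1
  rw [hε'def] at hA hB hC
  linarith [hopn, ha'.1, ha'.2, hb'.1, hb'.2, hA.1, hA.2, hB.1, hB.2, hC.1, hC.2]


/-- The distance from the Volterra operator
`V : L¹([0,1]) → C([0,1])` to the weakly compact operators equals `1/2`. -/
theorem volterra_weakEssentialNorm_eq_half
    (V : Lp ℝ 1 mu01 →L[ℝ] C(Icc (0:ℝ) 1, ℝ))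
    (hV : ∀ (f : Lp ℝ 1 mu01) (x : Icc (0:ℝ) 1),
      V f x = ∫ t in Ioc (0:ℝ) (x:ℝ), (f : ℝ → ℝ) t ∂mu01) :
    sInf {c : ℝ | ∃ S : Lp ℝ 1 mu01 →L[ℝ] C(Icc (0:ℝ) 1, ℝ),
      IsWeaklyCompactOperator S ∧ c = ‖V - S‖} = 1/2 := by
  have hwc : IsWeaklyCompactOperator S0 := S0_weaklyCompact
  have hlb : ∀ S : Lp ℝ 1 mu01 →L[ℝ] C(Icc (0:ℝ) 1, ℝ),
      IsWeaklyCompactOperator S → 1/2 ≤ ‖V - S‖ := fun S hS => lower_bound V hV S hS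
  apply le_antisymm
  · calc sInf {c : ℝ | ∃ S : Lp ℝ 1 mu01 →L[ℝ] C(Icc (0:ℝ) 1, ℝ),
        IsWeaklyCompactOperator S ∧ c = ‖V - S‖} ≤ ‖V - S0‖ :=
          csInf_le ⟨1/2, by rintro c ⟨S, hS, rfl⟩; exact hlb S hS⟩ ⟨S0, hwc, rfl⟩
    _ ≤ 1/2 := norm_V_sub_S0_le V hV
  · exact le_csInf ⟨‖V - S0‖, S0, hwc, rfl⟩ (by rintro c ⟨S, hS, rfl⟩; exact hlb S hS)
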